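/- For each $d \ge 2$, the bipartite graph with independent set $A$ of size $d$ and independent set $B$ containing, for each subset $S \subseteq A$ with $|S| \ge 2$, a vertex $b_S$ adjacent exactly to the vertices of $S$, has VC-dimension exactly $d$ and $A$ is an identifying code of it. -/

import Mathlib

/-- The bipartite graph with independent set `A = Fin d` and an independent set `B`
containing, for each `S ⊆ A` with `|S| ≥ 2`, a vertex adjacent exactly to the
vertices of `S`. -/
def subsetGraph (d : ℕ) : SimpleGraph (Fin d ⊕ {S : Finset (Fin d) // 2 ≤ S.card}) where
  Adj x y :=
    match x, y with
    | Sum.inl a, Sum.inr S => a ∈ S.val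
    | Sum.inr S, Sum.inl a => a ∈ S.val
    | _, _ => False
  symm := ⟨by rintro (a | S) (b | T) h <;> first | exact h.elim | exact h⟩
  loopless := ⟨by rintro (a | S) h <;> exact h⟩

/-- The same graph with an additional isolated vertex (realizing the empty trace). -/
def subsetGraph' (d : ℕ) :
    SimpleGraph ((Fin d ⊕ {S : Finset (Fin d) // 2 ≤ S.card}) ⊕ Unit) where
  Adj x y :=
    match x, y with
    | Sum.inl a, Sum.inl b => (subsetGraph d).Adj a b
    | _, _ => False
  symm := ⟨by
    rintro (a | u) (b | v) h
    · exact (subsetGraph d).adj_symm h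
    · exact h.elim
    · exact h.elim
    · exact h.elim⟩
  loopless := ⟨by
    rintro (a | u) h
    · exact (subsetGraph d).loopless.irrefl _ h
    · exact h⟩

/-- For `d ≥ 2`: the side `A` is an identifying code of the subset graph, and the graph
(with an added isolated vertex realizing the empty trace) has VC-dimension exactly `d`:
`A` is a shattered set of size `d` and every shattered set has size at most `d`. -/
theorem stmt8 (d : ℕ) (hd : 2 ≤ d) :
    -- A is an identifying code of `subsetGraph d`
    ((∀ v : Fin d ⊕ {S : Finset (Fin d) // 2 ≤ S.card},
        ∃ a : Fin d, Sum.inl a = v ∨ (subsetGraph d).Adj v (Sum.inl a)) ∧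
      (∀ u v : Fin d ⊕ {S : Finset (Fin d) // 2 ≤ S.card},
        {a : Fin d | Sum.inl a = u ∨ (subsetGraph d).Adj u (Sum.inl a)} =
          {a : Fin d | Sum.inl a = v ∨ (subsetGraph d).Adj v (Sum.inl a)} → u = v)) ∧
    -- the copy of A is shattered in `subsetGraph' d`, a set of size d
    (∃ X : Finset ((Fin d ⊕ {S : Finset (Fin d) // 2 ≤ S.card}) ⊕ Unit),
      X.card = d ∧
      (∀ S ⊆ (X : Set _), ∃ w,
        {x ∈ (X : Set _) | x = w ∨ (subsetGraph' d).Adj w x} = S)) ∧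
    -- and every shattered set of `subsetGraph' d` has size at most d
    (∀ X : Finset ((Fin d ⊕ {S : Finset (Fin d) // 2 ≤ S.card}) ⊕ Unit),
      (∀ S ⊆ (X : Set _), ∃ w,
        {x ∈ (X : Set _) | x = w ∨ (subsetGraph' d).Adj w x} = S) → X.card ≤ d) := by
  classical
  refine ⟨⟨?_, ?_⟩, ?_, ?_⟩
  · -- domination
    rintro (a | S)
    · exact ⟨a, Or.inl rfl⟩
    · obtain ⟨a, ha⟩ := Finset.card_pos.mp (by omega : 0 < S.val.card)
      exact ⟨a, Or.inr (by simpa [subsetGraph] using ha)⟩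
  · -- separation
    rintro (a | S) (b | T) h
    · have := Set.ext_iff.mp h a
      simp [subsetGraph] at this
      exact congrArg Sum.inl this
    · exfalso
      have h1 : ∀ x : Fin d, x = a ↔ x ∈ T.val := by
        intro x
        have := Set.ext_iff.mp h x
        simpa [subsetGraph] using this
      have hTa : T.val = {a} := by
        ext x; simp [← h1 x, eq_comm]
      have h2T := T.2
      rw [hTa] at h2T
      simp at h2T
    · exfalso
      have h1 : ∀ x : Fin d, x ∈ S.val ↔ x = b := by
        intro x
        have := Set.ext_iff.mp h x
        simpa [subsetGraph] using this
      have hSb : S.val = {b} := by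
        ext x; simp [h1 x, eq_comm]
      have h2S := S.2
      rw [hSb] at h2S
      simp at h2S
    · have : S.val = T.val := by
        ext x
        have := Set.ext_iff.mp h x
        simpa [subsetGraph] using this
      exact congrArg Sum.inr (Subtype.ext this)
  · -- shattering of A
    refine ⟨Finset.univ.image (fun a : Fin d => Sum.inl (Sum.inl a)), ?_, ?_⟩
    · rw [Finset.card_image_of_injective _ (fun a b hab => by simpa using hab)]
      simp
    · intro S hS
      set s : Finset (Fin d) := Finset.univ.filter
        (fun a => Sum.inl (Sum.inl a) ∈ S) with hs
      have hmem : ∀ x ∈ S, ∃ a ∈ s, x = Sum.inl (Sum.inl a) := by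
        intro x hx
        obtain ⟨a, -, rfl⟩ := by simpa using hS hx
        exact ⟨a, by simp [hs, hx], rfl⟩
      by_cases h0 : s = ∅
      · refine ⟨Sum.inr (), ?_⟩
        ext x
        simp only [Set.mem_sep_iff]
        constructor
        · rintro ⟨hxX, hx | hx⟩
          · simp at hxX; obtain ⟨a, rfl⟩ := hxX; simp at hx
          · simp [subsetGraph'] at hx
        · intro hx
          obtain ⟨a, ha, rfl⟩ := hmem x hx
          rw [h0] at ha; simp at ha
      · by_cases h1 : s.card = 1
        · obtain ⟨a, ha⟩ := Finset.card_eq_one.mp h1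
          refine ⟨Sum.inl (Sum.inl a), ?_⟩
          have haS : Sum.inl (Sum.inl a) ∈ S := by
            have : a ∈ s := by rw [ha]; simp
            simpa [hs] using this
          ext x
          simp only [Set.mem_sep_iff]
          constructor
          · rintro ⟨hxX, hx | hx⟩
            · rw [hx]; exact haS
            · exfalso
              simp at hxX; obtain ⟨b, rfl⟩ := hxX
              simpa [subsetGraph', subsetGraph] using hx
          · intro hx
            obtain ⟨b, hb, rfl⟩ := hmem x hx
            rw [ha] at hb; simp at hb; subst hb
            exact ⟨by simp, Or.inl rfl⟩
        · have h2 : 2 ≤ s.card := by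
            have hc0 : s.card ≠ 0 := fun h => h0 (Finset.card_eq_zero.mp h)
            omega
          refine ⟨Sum.inl (Sum.inr ⟨s, h2⟩), ?_⟩
          ext x
          simp only [Set.mem_sep_iff]
          constructor
          · rintro ⟨hxX, hx | hx⟩
            · exfalso; simp at hxX; obtain ⟨b, rfl⟩ := hxX; simp at hx
            · simp at hxX; obtain ⟨b, rfl⟩ := hxX
              have hb : b ∈ s := by simpa [subsetGraph', subsetGraph] using hx
              simpa [hs] using hb
          · intro hx
            obtain ⟨b, hb, rfl⟩ := hmem x hx
            exact ⟨by simp, Or.inr (by simpa [subsetGraph', subsetGraph] using hb)⟩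
  · -- upper bound
    intro X hX
    have key : ∀ T ∈ X.powerset, ∃ w,
        {x ∈ (X : Set _) | x = w ∨ (subsetGraph' d).Adj w x} = (T : Set _) := by
      intro T hT
      exact hX (T : Set _) (by exact_mod_cast Finset.mem_powerset.mp hT)
    choose f hf using key
    set g : Finset ((Fin d ⊕ {S : Finset (Fin d) // 2 ≤ S.card}) ⊕ Unit) →
        (Fin d ⊕ {S : Finset (Fin d) // 2 ≤ S.card}) ⊕ Unit :=
      fun T => if h : T ∈ X.powerset then f T h else Sum.inr () with hg
    have hinj : Set.InjOn g X.powerset := by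
      intro T1 h1 T2 h2 h12
      simp only [hg, Finset.mem_coe.mp h1, Finset.mem_coe.mp h2, dif_pos] at h12
      have := (hf T1 (Finset.mem_coe.mp h1)).symm.trans
        (h12 ▸ hf T2 (Finset.mem_coe.mp h2))
      exact_mod_cast this
    have hcard : X.powerset.card ≤ Finset.univ.card :=
      Finset.card_le_card_of_injOn g (fun _ _ => Finset.mem_univ _) hinj
    have hsub : Fintype.card {S : Finset (Fin d) // 2 ≤ S.card} = 2 ^ d - (d + 1) := by
      rw [Fintype.card_subtype]
      have hneg : (Finset.univ.filter fun S : Finset (Fin d) => ¬ 2 ≤ S.card) =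
          insert ∅ (Finset.univ.image fun a : Fin d => ({a} : Finset (Fin d))) := by
        ext S
        simp only [Finset.mem_filter, Finset.mem_univ, true_and, Finset.mem_insert,
          Finset.mem_image, not_le]
        constructor
        · intro h
          interval_cases hc : S.card
          · exact Or.inl (Finset.card_eq_zero.mp hc)
          · obtain ⟨a, ha⟩ := Finset.card_eq_one.mp hc
            exact Or.inr ⟨a, ha.symm⟩
        · rintro (rfl | ⟨a, -, rfl⟩) <;> simp
      have hnegcard : (Finset.univ.filter fun S : Finset (Fin d) => ¬ 2 ≤ S.card).card
          = d + 1 := by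
        rw [hneg, Finset.card_insert_of_notMem (by simp),
          Finset.card_image_of_injective _ Finset.singleton_injective]
        simp
      have htot := Finset.card_filter_add_card_filter_not
        (s := (Finset.univ : Finset (Finset (Fin d))))
        (p := fun S : Finset (Fin d) => 2 ≤ S.card)
      have huniv : (Finset.univ : Finset (Finset (Fin d))).card = 2 ^ d := by
        simp [Finset.card_univ]
      omega
    have hV : Finset.univ.card
        (α := (Fin d ⊕ {S : Finset (Fin d) // 2 ≤ S.card}) ⊕ Unit) = 2 ^ d := by
      rw [Finset.card_univ]
      have hdle : d + 1 ≤ 2 ^ d := Nat.lt_two_pow_self (n := d)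
      simp only [Fintype.card_sum, Fintype.card_fin, Fintype.card_unit, hsub]
      omega
    rw [Finset.card_powerset, hV] at hcard
    exact (Nat.pow_le_pow_iff_right (by norm_num : 1 < 2)).mp hcard
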